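/- Let D(σ, N) = D_min + (a/σ)^α + (b/N)^β with a, b, α, β > 0 and D_min ≥ 0, and suppose α < 1 or β < 1. For D₀ > D_min, let σ*(D₀), N*(D₀) be the optimizers minimizing C = k σ N D subject to D ≤ D₀. Then σ*(D₀) and N*(D₀) are both strictly decreasing functions of D₀ on (D_min, ∞), each of power-law form in (D₀ − D_min)⁻¹: σ*(D₀) = a((1+α/β)/(D₀−D_min))^{1/α} and N*(D₀) = b((1+β/α)/(D₀−D_min))^{1/β}. -/

import Mathlib

open Real

lemma jensen2 (w1 w2 u v : ℝ) (hw1 : 0 < w1) (hw2 : 0 < w2) (hw : w1 + w2 = 1)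
    (hu : 0 < u) (hv : 0 < v) :
    w1 * Real.log u + w2 * Real.log v ≤ Real.log (w1 * u + w2 * v) := by
  have := strictConcaveOn_log_Ioi.concaveOn.2 (Set.mem_Ioi.2 hu) (Set.mem_Ioi.2 hv)
    hw1.le hw2.le hw
  simpa [smul_eq_mul] using this

lemma jensen2_strict (w1 w2 u v : ℝ) (hw1 : 0 < w1) (hw2 : 0 < w2) (hw : w1 + w2 = 1)
    (hu : 0 < u) (hv : 0 < v) (hne : u ≠ v) :
    w1 * Real.log u + w2 * Real.log v < Real.log (w1 * u + w2 * v) := by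
  have := strictConcaveOn_log_Ioi.2 (Set.mem_Ioi.2 hu) (Set.mem_Ioi.2 hv) hne hw1 hw2 hw
  simpa [smul_eq_mul] using this

lemma bdry_log_le (p q d x y : ℝ) (hp : 0 < p) (hq : 0 < q) (hd : 0 < d)
    (hx : 0 < x) (hy : 0 < y) (hsum : x + y = d) :
    p * Real.log x + q * Real.log y ≤
      p * Real.log (d * p / (p + q)) + q * Real.log (d * q / (p + q)) := by
  have hpq : 0 < p + q := by linarith
  set xh := d * p / (p + q) with hxh_def
  set yh := d * q / (p + q) with hyh_def
  have hxh : 0 < xh := by positivity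
  have hyh : 0 < yh := by positivity
  have hw : p / (p + q) + q / (p + q) = 1 := by field_simp
  have hu : 0 < x / xh := by positivity
  have hv : 0 < y / yh := by positivity
  have key := jensen2 (p / (p+q)) (q / (p+q)) (x / xh) (y / yh)
    (by positivity) (by positivity) hw hu hv
  have harg : p / (p+q) * (x / xh) + q / (p+q) * (y / yh) = 1 := by
    rw [hxh_def, hyh_def]
    rw [← hsum]
    field_simp
  rw [harg, Real.log_one] at key
  have e : (p+q) * (p/(p+q) * Real.log (x/xh) + q/(p+q) * Real.log (y/yh))
      = p * Real.log (x/xh) + q * Real.log (y/yh) := by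
    field_simp
  have h2 := mul_le_mul_of_nonneg_left key hpq.le
  rw [e, mul_zero] at h2
  rw [Real.log_div hx.ne' hxh.ne', Real.log_div hy.ne' hyh.ne'] at h2
  nlinarith [h2]

lemma bdry_log_lt (p q d x y : ℝ) (hp : 0 < p) (hq : 0 < q) (hd : 0 < d)
    (hx : 0 < x) (hy : 0 < y) (hsum : x + y = d) (hne : x ≠ d * p / (p + q)) :
    p * Real.log x + q * Real.log y <
      p * Real.log (d * p / (p + q)) + q * Real.log (d * q / (p + q)) := by
  have hpq : 0 < p + q := by linarith
  set xh := d * p / (p + q) with hxh_def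
  set yh := d * q / (p + q) with hyh_def
  have hxh : 0 < xh := by positivity
  have hyh : 0 < yh := by positivity
  have hw : p / (p + q) + q / (p + q) = 1 := by field_simp
  have hu : 0 < x / xh := by positivity
  have hv : 0 < y / yh := by positivity
  have harg : p / (p+q) * (x / xh) + q / (p+q) * (y / yh) = 1 := by
    rw [hxh_def, hyh_def, ← hsum]
    field_simp
  have huv : x / xh ≠ y / yh := by
    intro h
    apply hne
    rw [← h] at harg
    have h1 : (p/(p+q) + q/(p+q)) * (x / xh) = 1 := by rw [add_mul]; exact harg
    rw [hw, one_mul] at h1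
    exact (div_eq_one_iff_eq hxh.ne').1 h1
  have key := jensen2_strict (p / (p+q)) (q / (p+q)) (x / xh) (y / yh)
    (by positivity) (by positivity) hw hu hv huv
  rw [harg, Real.log_one] at key
  have e : (p+q) * (p/(p+q) * Real.log (x/xh) + q/(p+q) * Real.log (y/yh))
      = p * Real.log (x/xh) + q * Real.log (y/yh) := by
    field_simp
  have h2 := mul_lt_mul_of_pos_left key hpq
  rw [e, mul_zero] at h2
  rw [Real.log_div hx.ne' hxh.ne', Real.log_div hy.ne' hyh.ne'] at h2
  nlinarith [h2]


lemma prod_rpow_lt_of_log (p q x y x' y' : ℝ) (hx : 0 < x) (hy : 0 < y)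
    (hx' : 0 < x') (hy' : 0 < y')
    (h : p * Real.log x + q * Real.log y < p * Real.log x' + q * Real.log y') :
    x ^ p * y ^ q < x' ^ p * y' ^ q := by
  have h1 : Real.log (x ^ p * y ^ q) < Real.log (x' ^ p * y' ^ q) := by
    rw [Real.log_mul (Real.rpow_pos_of_pos hx p).ne' (Real.rpow_pos_of_pos hy q).ne',
      Real.log_mul (Real.rpow_pos_of_pos hx' p).ne' (Real.rpow_pos_of_pos hy' q).ne',
      Real.log_rpow hx, Real.log_rpow hy, Real.log_rpow hx', Real.log_rpow hy']
    exact h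
  exact (Real.log_lt_log_iff (by positivity) (by positivity)).1 h1

lemma prod_rpow_le_of_log (p q x y x' y' : ℝ) (hx : 0 < x) (hy : 0 < y)
    (hx' : 0 < x') (hy' : 0 < y')
    (h : p * Real.log x + q * Real.log y ≤ p * Real.log x' + q * Real.log y') :
    x ^ p * y ^ q ≤ x' ^ p * y' ^ q := by
  have h1 : Real.log (x ^ p * y ^ q) ≤ Real.log (x' ^ p * y' ^ q) := by
    rw [Real.log_mul (Real.rpow_pos_of_pos hx p).ne' (Real.rpow_pos_of_pos hy q).ne',
      Real.log_mul (Real.rpow_pos_of_pos hx' p).ne' (Real.rpow_pos_of_pos hy' q).ne',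
      Real.log_rpow hx, Real.log_rpow hy, Real.log_rpow hx', Real.log_rpow hy']
    exact h
  exact (Real.log_le_log_iff (by positivity) (by positivity)).1 h1

-- negated-exponent versions
lemma neg_flip (p q x y x' y' : ℝ) (hx : 0 < x) (hy : 0 < y)
    (hx' : 0 < x') (hy' : 0 < y') (h : x ^ p * y ^ q ≤ x' ^ p * y' ^ q) :
    x' ^ (-p) * y' ^ (-q) ≤ x ^ (-p) * y ^ (-q) := by
  rw [Real.rpow_neg hx.le, Real.rpow_neg hy.le, Real.rpow_neg hx'.le, Real.rpow_neg hy'.le,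
    ← mul_inv, ← mul_inv]
  exact inv_anti₀ (by positivity) h

lemma neg_flip_lt (p q x y x' y' : ℝ) (hx : 0 < x) (hy : 0 < y)
    (hx' : 0 < x') (hy' : 0 < y') (h : x ^ p * y ^ q < x' ^ p * y' ^ q) :
    x' ^ (-p) * y' ^ (-q) < x ^ (-p) * y ^ (-q) := by
  rw [Real.rpow_neg hx.le, Real.rpow_neg hy.le, Real.rpow_neg hx'.le, Real.rpow_neg hy'.le,
    ← mul_inv, ← mul_inv]
  exact inv_strictAnti₀ (by positivity) h

lemma key_opt (p q Dmin d x y : ℝ) (hp : 0 < p) (hq : 0 < q) (hpq1 : 1 < p + q)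
    (hDmin : 0 ≤ Dmin) (hd : 0 < d) (hx : 0 < x) (hy : 0 < y) (hsum : x + y ≤ d)
    (hne : ¬(x = d * p / (p + q) ∧ y = d * q / (p + q))) :
    (d * p / (p + q)) ^ (-p) * (d * q / (p + q)) ^ (-q) * (Dmin + d) <
      x ^ (-p) * y ^ (-q) * (Dmin + (x + y)) := by
  have hpq : 0 < p + q := by linarith
  set xh := d * p / (p + q) with hxh_def
  set yh := d * q / (p + q) with hyh_def
  have hxh : 0 < xh := by positivity
  have hyh : 0 < yh := by positivity
  have hsumh : xh + yh = d := by rw [hxh_def, hyh_def]; field_simp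
  rcases eq_or_lt_of_le hsum with heq | hlt
  · -- boundary case
    have hxne : x ≠ xh := by
      intro h
      exact hne ⟨h, by linarith⟩
    have hlog := bdry_log_lt p q d x y hp hq hd hx hy heq hxne
    have hprod := prod_rpow_lt_of_log p q x y xh yh hx hy hxh hyh hlog
    have hflip := neg_flip_lt p q x y xh yh hx hy hxh hyh hprod
    rw [heq]
    exact mul_lt_mul_of_pos_right hflip (by linarith)
  · -- interior case: scale up
    set l := d / (x + y) with hl_def
    have hxy : 0 < x + y := by linarith
    have hl : 1 < l := (one_lt_div hxy).2 hlt
    have hl0 : 0 < l := by linarith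
    have hlsum : l * x + l * y = d := by
      rw [hl_def]; field_simp
    have hlx : 0 < l * x := by positivity
    have hly : 0 < l * y := by positivity
    -- step 1: hat point beats scaled point
    have hlog := bdry_log_le p q d (l * x) (l * y) hp hq hd hlx hly hlsum
    have hprod := prod_rpow_le_of_log p q (l * x) (l * y) xh yh hlx hly hxh hyh hlog
    have step1 : xh ^ (-p) * yh ^ (-q) * (Dmin + d) ≤
        (l * x) ^ (-p) * (l * y) ^ (-q) * (Dmin + d) :=
      mul_le_mul_of_nonneg_right (neg_flip p q (l*x) (l*y) xh yh hlx hly hxh hyh hprod)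
        (by linarith)
    -- step 2: scaled point beats original point
    have hpow1 : (1:ℝ) < l ^ (p + q) :=
      (Real.one_lt_rpow_iff_of_pos hl0).2 (Or.inl ⟨hl, hpq⟩)
    have hpow2 : (1:ℝ) < l ^ (p + q - 1) :=
      (Real.one_lt_rpow_iff_of_pos hl0).2 (Or.inl ⟨hl, by linarith⟩)
    have hpow3 : l ^ (p + q) = l ^ (p + q - 1) * l := by
      have h := Real.rpow_add hl0 (p + q - 1) 1
      rw [Real.rpow_one] at h
      rw [show p + q = p + q - 1 + 1 by ring, h]
      norm_num
    have hcore : l ^ (-(p + q)) * (Dmin + d) < Dmin + (x + y) := by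
      rw [Real.rpow_neg hl0.le]
      rw [inv_mul_lt_iff₀ (by positivity)]
      have e1 : l ^ (p + q) * (Dmin + (x + y)) =
          l ^ (p + q) * Dmin + l ^ (p + q - 1) * d := by
        rw [hpow3, ← hlsum]; ring
      rw [e1]
      have h1 : Dmin ≤ l ^ (p + q) * Dmin := le_mul_of_one_le_left hDmin hpow1.le
      have h2 : d < l ^ (p + q - 1) * d := lt_mul_of_one_lt_left hd hpow2
      linarith
    have e2 : (l * x) ^ (-p) * (l * y) ^ (-q) * (Dmin + d) =
        x ^ (-p) * y ^ (-q) * (l ^ (-(p + q)) * (Dmin + d)) := by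
      rw [Real.mul_rpow hl0.le hx.le, Real.mul_rpow hl0.le hy.le,
        show -(p+q) = -p + -q by ring, Real.rpow_add hl0]
      ring
    have step2 : (l * x) ^ (-p) * (l * y) ^ (-q) * (Dmin + d) <
        x ^ (-p) * y ^ (-q) * (Dmin + (x + y)) := by
      rw [e2]
      exact mul_lt_mul_of_pos_left hcore (by positivity)
    exact lt_of_le_of_lt step1 step2

theorem stmt_11 (a b α β k Dmin : ℝ)
    (ha : 0 < a) (hb : 0 < b) (hα : 0 < α) (hβ : 0 < β) (hk : 0 < k)
    (hDmin : 0 ≤ Dmin) (hαβ : α < 1 ∨ β < 1)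
    (D : ℝ → ℝ → ℝ) (hD : ∀ σ N, D σ N = Dmin + (a / σ) ^ α + (b / N) ^ β)
    (C : ℝ → ℝ → ℝ) (hC : ∀ σ N, C σ N = k * σ * N * D σ N)
    (σs Ns : ℝ → ℝ)
    (hopt : ∀ D₀, Dmin < D₀ →
      0 < σs D₀ ∧ 0 < Ns D₀ ∧ D (σs D₀) (Ns D₀) ≤ D₀ ∧
      ∀ σ N, 0 < σ → 0 < N → D σ N ≤ D₀ → C (σs D₀) (Ns D₀) ≤ C σ N) :
    (∀ D₀, Dmin < D₀ →
        σs D₀ = a * ((1 + α / β) / (D₀ - Dmin)) ^ (1 / α) ∧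
        Ns D₀ = b * ((1 + β / α) / (D₀ - Dmin)) ^ (1 / β)) ∧
    StrictAntiOn σs (Set.Ioi Dmin) ∧ StrictAntiOn Ns (Set.Ioi Dmin) := by
  have hconv : ∀ c z r : ℝ, 0 < c → 0 < z → 0 < r →
      (c / (c * z ^ (-(1/r)))) ^ r = z := by
    intro c z r hc hz hr
    have h1 : c / (c * z ^ (-(1/r))) = z ^ (1/r) := by
      rw [Real.rpow_neg hz.le]
      field_simp
    rw [h1, ← Real.rpow_mul hz.le, one_div_mul_cancel hr.ne', Real.rpow_one]
  have hform : ∀ D₀, Dmin < D₀ →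
      σs D₀ = a * ((1 + α / β) / (D₀ - Dmin)) ^ (1 / α) ∧
      Ns D₀ = b * ((1 + β / α) / (D₀ - Dmin)) ^ (1 / β) := by
    intro D₀ hD₀
    obtain ⟨hσ0, hN0, hfeas, hmin⟩ := hopt D₀ hD₀
    set σ0 := σs D₀ with hσ0_def
    set N0 := Ns D₀ with hN0_def
    set d := D₀ - Dmin with hd_def
    have hd : 0 < d := by rw [hd_def]; linarith
    set p := 1 / α with hp_def
    set q := 1 / β with hq_def
    have hp : 0 < p := by positivity
    have hq : 0 < q := by positivity
    have hpq : 0 < p + q := by linarith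
    have hpq1 : 1 < p + q := by
      rcases hαβ with h1 | h1
      · have : 1 < p := by rw [hp_def]; exact (one_lt_div hα).2 h1
        linarith
      · have : 1 < q := by rw [hq_def]; exact (one_lt_div hβ).2 h1
        linarith
    set x0 := (a / σ0) ^ α with hx0_def
    set y0 := (b / N0) ^ β with hy0_def
    have hx0 : 0 < x0 := Real.rpow_pos_of_pos (div_pos ha hσ0) α
    have hy0 : 0 < y0 := Real.rpow_pos_of_pos (div_pos hb hN0) β
    have hfeas' : x0 + y0 ≤ d := by
      rw [hD] at hfeas
      rw [hd_def]
      linarith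
    set xh := d * p / (p + q) with hxh_def
    set yh := d * q / (p + q) with hyh_def
    have hxh : 0 < xh := by positivity
    have hyh : 0 < yh := by positivity
    have hsumh : xh + yh = d := by rw [hxh_def, hyh_def]; field_simp
    set t1 := (1 + α / β) / d with ht1_def
    set t2 := (1 + β / α) / d with ht2_def
    have ht1 : 0 < t1 := by positivity
    have ht2 : 0 < t2 := by positivity
    have ht1x : t1 = xh⁻¹ := by
      rw [ht1_def, hxh_def, hp_def, hq_def]
      rw [inv_div]
      field_simp
    have ht2y : t2 = yh⁻¹ := by
      rw [ht2_def, hyh_def, hp_def, hq_def]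
      rw [inv_div]
      field_simp
      ring
    set σh := a * t1 ^ p with hσh_def
    set Nh := b * t2 ^ q with hNh_def
    have hσh : 0 < σh := by positivity
    have hNh : 0 < Nh := by positivity
    have hσh_eq : σh = a * xh ^ (-p) := by
      rw [hσh_def, ht1x, Real.inv_rpow hxh.le, ← Real.rpow_neg hxh.le]
    have hNh_eq : Nh = b * yh ^ (-q) := by
      rw [hNh_def, ht2y, Real.inv_rpow hyh.le, ← Real.rpow_neg hyh.le]
    have hxh_eq : (a / σh) ^ α = xh := by
      rw [hσh_eq, hp_def]
      exact hconv a xh α ha hxh hα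
    have hyh_eq : (b / Nh) ^ β = yh := by
      rw [hNh_eq, hq_def]
      exact hconv b yh β hb hyh hβ
    have hfeash : D σh Nh ≤ D₀ := by
      rw [hD, hxh_eq, hyh_eq]
      have : d = D₀ - Dmin := hd_def
      linarith
    have hCle : C σ0 N0 ≤ C σh Nh := hmin σh Nh hσh hNh hfeash
    have hσ0_eq : σ0 = a * x0 ^ (-p) := by
      have h1 : x0 ^ p = a / σ0 := by
        rw [hx0_def, hp_def, ← Real.rpow_mul (div_pos ha hσ0).le,
          mul_one_div_cancel hα.ne', Real.rpow_one]
      rw [Real.rpow_neg hx0.le, h1]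
      field_simp
    have hN0_eq : N0 = b * y0 ^ (-q) := by
      have h1 : y0 ^ q = b / N0 := by
        rw [hy0_def, hq_def, ← Real.rpow_mul (div_pos hb hN0).le,
          mul_one_div_cancel hβ.ne', Real.rpow_one]
      rw [Real.rpow_neg hy0.le, h1]
      field_simp
    have hC0 : C σ0 N0 = (k*a*b) * (x0 ^ (-p) * y0 ^ (-q) * (Dmin + (x0 + y0))) := by
      rw [hC, hD, ← hx0_def, ← hy0_def]
      rw [hσ0_eq, hN0_eq]
      ring
    have hCh : C σh Nh = (k*a*b) * (xh ^ (-p) * yh ^ (-q) * (Dmin + d)) := by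
      rw [hC, hD, hxh_eq, hyh_eq, hσh_eq, hNh_eq]
      rw [show Dmin + xh + yh = Dmin + d by linarith [hsumh]]
      ring
    have hkab : 0 < k * a * b := by positivity
    have hgle : x0 ^ (-p) * y0 ^ (-q) * (Dmin + (x0 + y0)) ≤
        xh ^ (-p) * yh ^ (-q) * (Dmin + d) := by
      rw [hC0, hCh] at hCle
      exact le_of_mul_le_mul_left hCle hkab
    have hxy : x0 = xh ∧ y0 = yh := by
      by_contra hne
      have hne' : ¬(x0 = d * p / (p + q) ∧ y0 = d * q / (p + q)) := by
        rw [← hxh_def, ← hyh_def]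
        exact hne
      have hlt := key_opt p q Dmin d x0 y0 hp hq hpq1 hDmin hd hx0 hy0 hfeas' hne'
      rw [← hxh_def, ← hyh_def] at hlt
      linarith
    constructor
    · rw [hσ0_eq, hxy.1, ← hσh_eq]
    · rw [hN0_eq, hxy.2, ← hNh_eq]
  refine ⟨hform, ?_, ?_⟩
  · intro D₁ h1 D₂ h2 h12
    simp only [Set.mem_Ioi] at h1 h2
    rw [(hform D₁ h1).1, (hform D₂ h2).1]
    have hc : 0 < 1 + α / β := by positivity
    apply mul_lt_mul_of_pos_left _ ha
    apply Real.rpow_lt_rpow (le_of_lt (div_pos hc (by linarith))) _ (by positivity)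
    exact div_lt_div_of_pos_left hc (by linarith) (by linarith)
  · intro D₁ h1 D₂ h2 h12
    simp only [Set.mem_Ioi] at h1 h2
    rw [(hform D₁ h1).2, (hform D₂ h2).2]
    have hc : 0 < 1 + β / α := by positivity
    apply mul_lt_mul_of_pos_left _ hb
    apply Real.rpow_lt_rpow (le_of_lt (div_pos hc (by linarith))) _ (by positivity)
    exact div_lt_div_of_pos_left hc (by linarith) (by linarith)
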